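/- Let S ⊆ ℝⁿ be a nonempty closed set, q ∉ S, and p' ∈ S a nearest point to q. If the unsigned distance function d(x) = infDist x S is differentiable at q, then its gradient at q equals the unit vector pointing from p' to q: ∇d(q) = (q - p')/‖q - p'‖. -/

import Mathlib

open Metric InnerProductSpace Set

/-- If the unsigned distance function to a nonempty closed set `S` is differentiable at
`q ∉ S` with nearest point `p' ∈ S`, then its gradient at `q` is the unit vector from `p'`
to `q`. -/
theorem stmt_4 {n : ℕ} (S : Set (EuclideanSpace ℝ (Fin n))) (hS : S.Nonempty)
    (hSc : IsClosed S) (q p' : EuclideanSpace ℝ (Fin n)) (hq : q ∉ S) (hp' : p' ∈ S)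
    (hnear : ‖q - p'‖ = Metric.infDist q S)
    (hdiff : DifferentiableAt ℝ (fun x => Metric.infDist x S) q) :
    gradient (fun x => Metric.infDist x S) q = ‖q - p'‖⁻¹ • (q - p') := by
  set d : EuclideanSpace ℝ (Fin n) → ℝ := fun x => Metric.infDist x S with hd
  set v : EuclideanSpace ℝ (Fin n) := q - p' with hv
  set g : EuclideanSpace ℝ (Fin n) := gradient d q with hg
  have hvne : v ≠ 0 := sub_ne_zero.2 fun h => hq (h ▸ hp')
  have hvpos : (0:ℝ) < ‖v‖ := norm_pos_iff.2 hvne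
  have hgrad : HasGradientAt d g q := hdiff.hasGradientAt
  have hfd : HasFDerivAt d (toDual ℝ _ g) q := hasGradientAt_iff_hasFDerivAt.1 hgrad
  -- ‖g‖ ≤ 1 since d is 1-Lipschitz
  have hgle : ‖g‖ ≤ 1 := by
    have := norm_fderiv_le_of_lipschitz ℝ (x₀ := q) (Metric.lipschitz_infDist_pt S)
    rwa [hfd.fderiv, (toDual ℝ _).norm_map] at this
  -- on the segment, d(q + t • v) = (1+t) * ‖v‖ for t ∈ [-1, 0]
  have hseg : ∀ t : ℝ, t ∈ Set.Icc (-1:ℝ) 0 → d (q + t • v) = (1 + t) * ‖v‖ := by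
    intro t ht
    have h1t : 0 ≤ 1 + t := by linarith [ht.1]
    have hxp : ‖q + t • v - p'‖ = (1 + t) * ‖v‖ := by
      have h : q + t • v - p' = (1 + t) • v := by rw [hv]; module
      rw [h, norm_smul, Real.norm_of_nonneg h1t]
    refine le_antisymm ?_ ?_
    · calc d (q + t • v) ≤ dist (q + t • v) p' := Metric.infDist_le_dist_of_mem hp'
        _ = (1 + t) * ‖v‖ := by rw [dist_eq_norm, hxp]
    · have h2 : d q ≤ d (q + t • v) + dist q (q + t • v) :=
        Metric.infDist_le_infDist_add_dist
      have h3 : dist q (q + t • v) = -t * ‖v‖ := by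
        rw [dist_eq_norm]
        have h : q - (q + t • v) = (-t) • v := by module
        rw [h, norm_smul, Real.norm_of_nonneg (by linarith [ht.2])]
      have h4 : d q = ‖v‖ := hnear.symm
      nlinarith [h2, h3, h4]
  -- Icc (-1) 0 is a neighborhood of 0 within Iic 0
  have hmem : Set.Icc (-1:ℝ) 0 ∈ nhdsWithin (0:ℝ) (Set.Iic 0) := by
    have h1 : Set.Ici (-1:ℝ) ∈ nhdsWithin (0:ℝ) (Set.Iic 0) :=
      mem_nhdsWithin_of_mem_nhds (Ici_mem_nhds (by norm_num))
    have h2 : Set.Iic (0:ℝ) ∈ nhdsWithin (0:ℝ) (Set.Iic 0) := self_mem_nhdsWithin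
    simpa [Set.Ici_inter_Iic] using Filter.inter_mem h1 h2
  -- directional derivative: ⟪g, v⟫ = ‖v‖
  have hinner : (inner ℝ g v : ℝ) = ‖v‖ := by
    have hcomp : HasDerivAt (fun t : ℝ => d (q + t • v)) (inner ℝ g v) 0 := by
      have hline : HasDerivAt (fun t : ℝ => q + t • v) v 0 := by
        simpa using ((hasDerivAt_id (0:ℝ)).smul_const v).const_add q
      have hfd' : HasFDerivAt d (toDual ℝ _ g) (q + (0:ℝ) • v) := by simpa using hfd
      have := hfd'.comp_hasDerivAt 0 hline
      simp at this
      exact this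
    have haff : HasDerivAt (fun t : ℝ => (1 + t) * ‖v‖) ‖v‖ 0 := by
      simpa using ((hasDerivAt_id (0:ℝ)).const_add 1).mul_const ‖v‖
    have h₂ : HasDerivWithinAt (fun t : ℝ => d (q + t • v)) ‖v‖ (Set.Iic 0) 0 := by
      refine haff.hasDerivWithinAt.congr_of_eventuallyEq ?_ ?_
      · exact Filter.eventuallyEq_of_mem hmem fun t ht => hseg t ht
      · simpa using hseg 0 (by norm_num)
    have hu : UniqueDiffWithinAt ℝ (Set.Iic (0:ℝ)) 0 :=
      uniqueDiffOn_Iic 0 0 (by simp)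
    have e1 := hcomp.hasDerivWithinAt (s := Set.Iic 0) |>.derivWithin hu
    have e2 := h₂.derivWithin hu
    rw [← e1, e2]
  -- conclude by equality in Cauchy–Schwarz
  have hcs : (inner ℝ g v : ℝ) ≤ ‖g‖ * ‖v‖ := real_inner_le_norm g v
  have hg1 : ‖g‖ = 1 := by
    have : 1 ≤ ‖g‖ := by
      rw [hinner] at hcs
      nlinarith
    linarith
  have heq : ‖v‖ • g = ‖g‖ • v :=
    inner_eq_norm_mul_iff_real.1 (by rw [hinner, hg1, one_mul])
  rw [hg1, one_smul] at heq
  show g = ‖v‖⁻¹ • v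
  calc g = ‖v‖⁻¹ • (‖v‖ • g) := by
        rw [smul_smul, inv_mul_cancel₀ (ne_of_gt hvpos), one_smul]
    _ = ‖v‖⁻¹ • v := by rw [heq]
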